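/- Let G be a finite p-group, N a normal subgroup with C_G(N) = Z(N), A = Ω₁(Z(N)), A* = {a ∈ Z(N) : a^p ∈ Z(G)}. Suppose every automorphism of G of order p fixing N elementwise is inner. Then for all i ≥ 1, Z¹(G/N, A ∩ Z_i(G)) ≅ (A* ∩ Z_{i+1}(G))/Z(G). -/

import Mathlib

section Stmt15Aux

variable {G : Type*} [Group G]

/-- Auxiliary map sending `g : G` to the function `G ⧸ N → G` given on the chosen
representative `x` of a coset by `x⁻¹ * g * x * g⁻¹`. -/
noncomputable def stmt15Phi (N : Subgroup G) (g : G) : G ⧸ N → G :=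
  fun q => (Quotient.out q)⁻¹ * g * Quotient.out q * g⁻¹

theorem stmt15_centConj (N : Subgroup G) [N.Normal] {g : G}
    (hg : g ∈ Subgroup.centralizer (N : Set G)) (x : G) :
    x⁻¹ * g * x ∈ Subgroup.centralizer (N : Set G) := by
  rw [Subgroup.mem_centralizer_iff] at hg ⊢
  intro n hn
  have hn' : x * n * x⁻¹ ∈ N := Subgroup.Normal.conj_mem ‹N.Normal› n hn x
  have h := hg _ hn'
  calc n * (x⁻¹ * g * x) = x⁻¹ * (x * n * x⁻¹ * g) * x := by group
    _ = x⁻¹ * (g * (x * n * x⁻¹)) * x := by rw [h]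
    _ = (x⁻¹ * g * x) * n := by group

theorem stmt15Phi_mk (N : Subgroup G) [N.Normal] {g : G}
    (hg : g ∈ Subgroup.centralizer (N : Set G)) (x : G) :
    stmt15Phi N g (QuotientGroup.mk x) = x⁻¹ * g * x * g⁻¹ := by
  obtain ⟨n, hyx⟩ := QuotientGroup.mk_out_eq_mul N x
  have hn : (n : G) ∈ N := n.2
  have hgn : (n : G) * g = g * n := Subgroup.mem_centralizer_iff.mp hg n hn
  have hgn' : (n : G) * g⁻¹ = g⁻¹ * n := by
    calc (n : G) * g⁻¹ = g⁻¹ * (g * n) * g⁻¹ := by group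
      _ = g⁻¹ * ((n : G) * g) * g⁻¹ := by rw [hgn]
      _ = g⁻¹ * n := by group
  have hc : x⁻¹ * g * x * g⁻¹ ∈ Subgroup.centralizer (N : Set G) :=
    mul_mem (stmt15_centConj N hg x) (inv_mem hg)
  have hcn : (n : G) * (x⁻¹ * g * x * g⁻¹) = (x⁻¹ * g * x * g⁻¹) * n :=
    Subgroup.mem_centralizer_iff.mp hc n hn
  calc stmt15Phi N g (QuotientGroup.mk x)
      = (Quotient.out (QuotientGroup.mk x : G ⧸ N))⁻¹ * g *
          Quotient.out (QuotientGroup.mk x : G ⧸ N) * g⁻¹ := rfl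
    _ = (x * n)⁻¹ * g * (x * n) * g⁻¹ := by rw [hyx]
    _ = (n : G)⁻¹ * (x⁻¹ * g * x) * ((n : G) * g⁻¹) := by group
    _ = (n : G)⁻¹ * (x⁻¹ * g * x) * (g⁻¹ * n) := by rw [hgn']
    _ = (n : G)⁻¹ * ((x⁻¹ * g * x * g⁻¹) * n) := by group
    _ = (n : G)⁻¹ * ((n : G) * (x⁻¹ * g * x * g⁻¹)) := by rw [← hcn]
    _ = x⁻¹ * g * x * g⁻¹ := by group

theorem stmt15Phi_out (N : Subgroup G) (g : G) :
    stmt15Phi N (Quotient.out (QuotientGroup.mk g : G ⧸ Subgroup.center G)) =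
      stmt15Phi N g := by
  obtain ⟨z, hz⟩ := QuotientGroup.mk_out_eq_mul (Subgroup.center G) g
  have hzc : ∀ a : G, a * z = z * a := Subgroup.mem_center_iff.mp z.2
  funext q
  set x := Quotient.out q with hx
  calc stmt15Phi N (Quotient.out (QuotientGroup.mk g : G ⧸ Subgroup.center G)) q
      = x⁻¹ * (g * z) * x * (g * z)⁻¹ := by rw [stmt15Phi, hz]
    _ = x⁻¹ * g * ((z : G) * x) * ((z : G)⁻¹ * g⁻¹) := by group
    _ = x⁻¹ * g * (x * z) * ((z : G)⁻¹ * g⁻¹) := by rw [← hzc]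
    _ = x⁻¹ * g * x * g⁻¹ := by group
    _ = stmt15Phi N g q := rfl

end Stmt15Aux

/-- Let `G` be a finite `p`-group, `N` a normal subgroup with
`C_G(N) = Z(N)`, `A = Ω₁(Z(N))`, `A* = {a ∈ Z(N) : a^p ∈ Z(G)}`.  Suppose every
automorphism of `G` of order `p` fixing `N` elementwise is inner.  Then for all
`i ≥ 1` there is a group isomorphism
`Z¹(G/N, A ∩ Z_i(G)) ≅ (A* ∩ Z_{i+1}(G))/Z(G)`, the latter realized as the image
of `A* ∩ Z_{i+1}(G)` in `G/Z(G)`. -/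
theorem stmt15 {p : ℕ} [Fact p.Prime] {G : Type*} [Group G] [Finite G]
    (hG : IsPGroup p G) (N : Subgroup G) [N.Normal]
    (hCN : Subgroup.centralizer (N : Set G) ≤ N)
    (ZN A Astar : Subgroup G)
    (hZN : ZN = Subgroup.centralizer (N : Set G) ⊓ N)
    (hA : A = Subgroup.closure {x : G | x ∈ ZN ∧ x ^ p = 1})
    (hAstar : Astar = Subgroup.closure {x : G | x ∈ ZN ∧ x ^ p ∈ Subgroup.center G})
    (hinner : ∀ α : MulAut G, orderOf α = p → (∀ x ∈ N, α x = x) →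
      ∃ g : G, α = MulAut.conj g) :
    ∀ i : ℕ, 1 ≤ i →
      ∃ e : {f : G ⧸ N → G //
              (∀ q, f q ∈ A ⊓ upperCentralSeries G i) ∧
              ∀ g h : G, f (QuotientGroup.mk (g * h)) =
                h⁻¹ * f (QuotientGroup.mk g) * h * f (QuotientGroup.mk h)} ≃
            ((Astar ⊓ upperCentralSeries G (i + 1)).map
              (QuotientGroup.mk' (Subgroup.center G))),
        ∀ f₁ f₂ (hprod : (∀ q, (f₁.1 * f₂.1) q ∈ A ⊓ upperCentralSeries G i) ∧
            ∀ g h : G, (f₁.1 * f₂.1) (QuotientGroup.mk (g * h)) =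
              h⁻¹ * (f₁.1 * f₂.1) (QuotientGroup.mk g) * h *
                (f₁.1 * f₂.1) (QuotientGroup.mk h)),
          e ⟨f₁.1 * f₂.1, hprod⟩ = e f₁ * e f₂ := by
  intro i hi
  classical
  have hp : p.Prime := Fact.out
  -- basic facts about ZN
  have hZNc : ZN = Subgroup.centralizer (N : Set G) := by
    rw [hZN, inf_eq_left.mpr hCN]
  have hZNN : ZN ≤ N := by rw [hZN]; exact inf_le_right
  have hcomm : ∀ a ∈ ZN, ∀ b ∈ ZN, a * b = b * a := by
    intro a ha b hb
    have ha' : a ∈ Subgroup.centralizer (N : Set G) := by rw [← hZNc]; exact ha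
    exact (Subgroup.mem_centralizer_iff.mp ha' b (hZNN hb)).symm
  have hconjZN : ∀ g ∈ ZN, ∀ x : G, x⁻¹ * g * x ∈ ZN := by
    intro g hg x
    rw [hZNc] at hg ⊢
    exact stmt15_centConj N hg x
  -- elements of Astar
  have hAstarP : ∀ a ∈ Astar, a ∈ ZN ∧ a ^ p ∈ Subgroup.center G := by
    intro a ha
    rw [hAstar] at ha
    refine Subgroup.closure_induction (fun x hx => hx)
      ⟨one_mem _, by simpa using one_mem (Subgroup.center G)⟩ ?_ ?_ ha
    · rintro x y hx hy ⟨hx1, hx2⟩ ⟨hy1, hy2⟩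
      have hc : Commute x y := hcomm x hx1 y hy1
      exact ⟨mul_mem hx1 hy1, by rw [hc.mul_pow]; exact mul_mem hx2 hy2⟩
    · rintro x hx ⟨hx1, hx2⟩
      exact ⟨inv_mem hx1, by rw [inv_pow]; exact inv_mem hx2⟩
  -- elements of A
  have hAP : ∀ a ∈ A, a ∈ ZN ∧ a ^ p = 1 := by
    intro a ha
    rw [hA] at ha
    refine Subgroup.closure_induction (fun x hx => hx)
      ⟨one_mem _, one_pow p⟩ ?_ ?_ ha
    · rintro x y hx hy ⟨hx1, hx2⟩ ⟨hy1, hy2⟩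
      have hc : Commute x y := hcomm x hx1 y hy1
      exact ⟨mul_mem hx1 hy1, by rw [hc.mul_pow, hx2, hy2, one_mul]⟩
    · rintro x hx ⟨hx1, hx2⟩
      exact ⟨inv_mem hx1, by rw [inv_pow, hx2, inv_one]⟩
  have hconjpow : ∀ (x g : G) (n : ℕ), (x⁻¹ * g * x) ^ n = x⁻¹ * g ^ n * x := by
    intro x g n
    induction n with
    | zero => simp
    | succ k ih => rw [pow_succ, pow_succ, ih]; group
  -- membership data for elements of the image subgroup
  have hmem : ∀ s : ((Astar ⊓ upperCentralSeries G (i + 1)).map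
        (QuotientGroup.mk' (Subgroup.center G))),
      (∀ q, stmt15Phi N (Quotient.out (s.1 : G ⧸ Subgroup.center G)) q ∈
          A ⊓ upperCentralSeries G i) ∧
      ∀ g h : G, stmt15Phi N (Quotient.out (s.1 : G ⧸ Subgroup.center G))
            (QuotientGroup.mk (g * h)) =
          h⁻¹ * stmt15Phi N (Quotient.out (s.1 : G ⧸ Subgroup.center G))
              (QuotientGroup.mk g) * h *
            stmt15Phi N (Quotient.out (s.1 : G ⧸ Subgroup.center G))
              (QuotientGroup.mk h) := by
    rintro ⟨-, g, hg, rfl⟩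
    simp only [QuotientGroup.mk'_apply, stmt15Phi_out]
    obtain ⟨hgA, hgU⟩ := hg
    have hgZN : g ∈ ZN := (hAstarP g hgA).1
    have hgpZ : g ^ p ∈ Subgroup.center G := (hAstarP g hgA).2
    have hgc : g ∈ Subgroup.centralizer (N : Set G) := by rw [← hZNc]; exact hgZN
    constructor
    · intro q
      set x := Quotient.out q with hx
      have hval : stmt15Phi N g q = x⁻¹ * g * x * g⁻¹ := rfl
      rw [hval]
      have hcZN : x⁻¹ * g * x * g⁻¹ ∈ ZN :=
        mul_mem (hconjZN g hgZN x) (inv_mem hgZN)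
      constructor
      · -- membership in A
        have hcp : (x⁻¹ * g * x * g⁻¹) ^ p = 1 := by
          have hc : Commute (x⁻¹ * g * x) g⁻¹ :=
            hcomm _ (hconjZN g hgZN x) _ (inv_mem hgZN)
          rw [hc.mul_pow, hconjpow, inv_pow]
          have hz : ∀ a : G, a * g ^ p = g ^ p * a := Subgroup.mem_center_iff.mp hgpZ
          calc x⁻¹ * g ^ p * x * (g ^ p)⁻¹
              = x⁻¹ * (g ^ p * x) * (g ^ p)⁻¹ := by group
            _ = x⁻¹ * (x * g ^ p) * (g ^ p)⁻¹ := by rw [← hz]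
            _ = 1 := by group
        rw [hA]
        exact Subgroup.subset_closure ⟨hcZN, hcp⟩
      · -- membership in the upper central series
        have h1 : g * x * g⁻¹ * x⁻¹ ∈ upperCentralSeries G i :=
          mem_upperCentralSeries_succ_iff.mp hgU x
        have h2 : x⁻¹ * (g * x * g⁻¹ * x⁻¹) * x⁻¹⁻¹ ∈ upperCentralSeries G i :=
          Subgroup.Normal.conj_mem (inferInstance : (Subgroup.upperCentralSeries G i).Normal) _ h1 x⁻¹
        have h3 : x⁻¹ * (g * x * g⁻¹ * x⁻¹) * x⁻¹⁻¹ = x⁻¹ * g * x * g⁻¹ := by group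
        rwa [h3] at h2
    · -- the cocycle identity
      intro a b
      rw [stmt15Phi_mk N hgc, stmt15Phi_mk N hgc, stmt15Phi_mk N hgc]
      group
  -- the candidate inverse map Ψ
  let Ψ : ((Astar ⊓ upperCentralSeries G (i + 1)).map
        (QuotientGroup.mk' (Subgroup.center G))) →
      {f : G ⧸ N → G //
        (∀ q, f q ∈ A ⊓ upperCentralSeries G i) ∧
        ∀ g h : G, f (QuotientGroup.mk (g * h)) =
          h⁻¹ * f (QuotientGroup.mk g) * h * f (QuotientGroup.mk h)} :=
    fun s => ⟨stmt15Phi N (Quotient.out (s.1 : G ⧸ Subgroup.center G)), hmem s⟩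
  have hΨval : ∀ s, (Ψ s).1 = stmt15Phi N (Quotient.out (s.1 : G ⧸ Subgroup.center G)) :=
    fun s => rfl
  -- injectivity
  have hinj : Function.Injective Ψ := by
    rintro ⟨s₁, g₁, hg₁, rfl⟩ ⟨s₂, g₂, hg₂, rfl⟩ h
    have h' := congrArg Subtype.val h
    rw [hΨval, hΨval] at h'
    simp only [QuotientGroup.mk'_apply, stmt15Phi_out] at h'
    have hg₁ZN : g₁ ∈ ZN := (hAstarP g₁ hg₁.1).1
    have hg₂ZN : g₂ ∈ ZN := (hAstarP g₂ hg₂.1).1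
    have hg₁c : g₁ ∈ Subgroup.centralizer (N : Set G) := by rw [← hZNc]; exact hg₁ZN
    have hg₂c : g₂ ∈ Subgroup.centralizer (N : Set G) := by rw [← hZNc]; exact hg₂ZN
    have hE : ∀ x : G, x⁻¹ * g₁ * x * g₁⁻¹ = x⁻¹ * g₂ * x * g₂⁻¹ := by
      intro x
      rw [← stmt15Phi_mk N hg₁c x, ← stmt15Phi_mk N hg₂c x, h']
    have hz : g₁⁻¹ * g₂ ∈ Subgroup.center G := by
      rw [Subgroup.mem_center_iff]
      intro x
      calc x * (g₁⁻¹ * g₂) = g₁⁻¹ * x * (x⁻¹ * g₁ * x * g₁⁻¹) * g₂ := by group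
        _ = g₁⁻¹ * x * (x⁻¹ * g₂ * x * g₂⁻¹) * g₂ := by rw [hE]
        _ = (g₁⁻¹ * g₂) * x := by group
    apply Subtype.ext
    show (QuotientGroup.mk' (Subgroup.center G)) g₁ = (QuotientGroup.mk' (Subgroup.center G)) g₂
    simp only [QuotientGroup.mk'_apply]
    exact QuotientGroup.eq.mpr hz
  -- surjectivity
  have hsurj : Function.Surjective Ψ := by
    rintro ⟨f, hf⟩
    -- the value of f at 1 is 1
    have hf1 : f (QuotientGroup.mk (1 : G)) = 1 := by
      have h := hf.2 1 1
      simp only [mul_one, one_mul, inv_one] at h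
      exact (left_eq_mul.mp h)
    have hfN : ∀ x ∈ N, f (QuotientGroup.mk x) = 1 := by
      intro x hx
      have : (QuotientGroup.mk x : G ⧸ N) = QuotientGroup.mk 1 := by
        simp [QuotientGroup.eq_one_iff, hx]
      rw [this, hf1]
    -- construct the automorphism x ↦ x * f x̄
    have hmul : ∀ x y : G, (x * y) * f (QuotientGroup.mk (x * y)) =
        (x * f (QuotientGroup.mk x)) * (y * f (QuotientGroup.mk y)) := by
      intro x y
      rw [hf.2 x y]
      group
    let αm : G →* G := MonoidHom.mk' (fun x => x * f (QuotientGroup.mk x)) hmul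
    have hαinj : Function.Injective αm := by
      rw [injective_iff_map_eq_one]
      intro a ha
      have haN : a ∈ N := by
        have ha' : a * f (QuotientGroup.mk a) = 1 := ha
        have : a = (f (QuotientGroup.mk a))⁻¹ := eq_inv_of_mul_eq_one_left ha'
        rw [this]
        exact inv_mem (hZNN ((hAP _ ((hf.1 (QuotientGroup.mk a)).1)).1))
      calc a = a * f (QuotientGroup.mk a) := by rw [hfN a haN, mul_one]
        _ = 1 := ha
    have hαbij : Function.Bijective αm := (Finite.injective_iff_bijective).mp hαinj
    let α : MulAut G := MulEquiv.ofBijective αm hαbij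
    have hαapp : ∀ x : G, α x = x * f (QuotientGroup.mk x) := fun x => rfl
    have hαN : ∀ x ∈ N, α x = x := by
      intro x hx
      rw [hαapp, hfN x hx, mul_one]
    have hαpow : ∀ (k : ℕ) (x : G), (α ^ k) x = x * (f (QuotientGroup.mk x)) ^ k := by
      intro k
      induction k with
      | zero => intro x; simp
      | succ k ih =>
        intro x
        have hfx : f (QuotientGroup.mk x) ∈ N :=
          hZNN ((hAP _ ((hf.1 (QuotientGroup.mk x)).1)).1)
        have hfix : α ((f (QuotientGroup.mk x)) ^ k) = (f (QuotientGroup.mk x)) ^ k := by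
          have := hαN _ (pow_mem hfx k)
          exact this
        calc (α ^ (k + 1)) x = α ((α ^ k) x) := by
              rw [pow_succ' α k]; rfl
          _ = α (x * (f (QuotientGroup.mk x)) ^ k) := by rw [ih]
          _ = α x * α ((f (QuotientGroup.mk x)) ^ k) := by rw [map_mul]
          _ = x * f (QuotientGroup.mk x) * (f (QuotientGroup.mk x)) ^ k := by
              rw [hαapp, hfix]
          _ = x * (f (QuotientGroup.mk x)) ^ (k + 1) := by
              rw [pow_succ']; group
    have hαp : α ^ p = 1 := by
      ext x
      have hfx : (f (QuotientGroup.mk x)) ^ p = 1 :=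
        (hAP _ ((hf.1 (QuotientGroup.mk x)).1)).2
      rw [hαpow p x, hfx, mul_one]
      rfl
    by_cases hα1 : α = 1
    · -- f is trivial; take g = 1
      have hftriv : ∀ q, f q = 1 := by
        intro q
        have h1 : f (QuotientGroup.mk (Quotient.out q)) = 1 := by
          have := hαapp (Quotient.out q)
          rw [hα1] at this
          have h2 : Quotient.out q * 1 = Quotient.out q *
              f (QuotientGroup.mk (Quotient.out q)) := by
            rw [mul_one]; exact this
          exact (mul_left_cancel h2).symm
        rwa [QuotientGroup.out_eq'] at h1
      refine ⟨⟨(QuotientGroup.mk' (Subgroup.center G)) 1, 1, ⟨one_mem _, one_mem _⟩, rfl⟩, ?_⟩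
      apply Subtype.ext
      rw [hΨval]
      simp only [QuotientGroup.mk'_apply, stmt15Phi_out]
      funext q
      rw [hftriv q]
      show (Quotient.out q)⁻¹ * 1 * Quotient.out q * 1⁻¹ = 1
      group
    · -- α has order p; it is inner by hypothesis
      have horder : orderOf α = p := by
        have hdvd : orderOf α ∣ p := orderOf_dvd_of_pow_eq_one hαp
        rcases (Nat.Prime.eq_one_or_self_of_dvd hp _ hdvd) with h | h
        · exact absurd (orderOf_eq_one_iff.mp h) hα1
        · exact h
      obtain ⟨g, hg⟩ := hinner α horder hαN
      have hfg : ∀ x : G, f (QuotientGroup.mk x) = x⁻¹ * g * x * g⁻¹ := by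
        intro x
        have h := hαapp x
        rw [hg, MulAut.conj_apply] at h
        have h' : g * x * g⁻¹ = x * f (QuotientGroup.mk x) := h
        calc f (QuotientGroup.mk x) = x⁻¹ * (x * f (QuotientGroup.mk x)) * g * g⁻¹ := by group
          _ = x⁻¹ * (g * x * g⁻¹) * g * g⁻¹ := by rw [h']
          _ = x⁻¹ * g * x * g⁻¹ := by group
      have hgc : g ∈ Subgroup.centralizer (N : Set G) := by
        rw [Subgroup.mem_centralizer_iff]
        intro n hn
        have h1 : g * n * g⁻¹ = n := by
          have := hαN n hn
          rw [hg] at this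
          exact this
        calc n * g = (g * n * g⁻¹) * g := by rw [h1]
          _ = g * n := by group
      have hgZN : g ∈ ZN := by rw [hZNc]; exact hgc
      have hgpZ : g ^ p ∈ Subgroup.center G := by
        rw [Subgroup.mem_center_iff]
        intro a
        have h1 : (MulAut.conj (g ^ p)) a = a := by
          have h2 : MulAut.conj (g ^ p) = α ^ p := by
            rw [map_pow, ← hg]
          rw [h2, hαp]
          rfl
        have h1' : g ^ p * a * (g ^ p)⁻¹ = a := h1
        calc a * g ^ p = (g ^ p * a * (g ^ p)⁻¹) * g ^ p := by rw [h1']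
          _ = g ^ p * a := by group
      have hgA : g ∈ Astar := by
        rw [hAstar]
        exact Subgroup.subset_closure ⟨hgZN, hgpZ⟩
      have hgU : g ∈ upperCentralSeries G (i + 1) := by
        apply Subgroup.mem_upperCentralSeries_succ_iff.mpr
        intro y
        have h1 : y⁻¹ * g * y * g⁻¹ ∈ upperCentralSeries G i := by
          rw [← hfg y]
          exact (hf.1 (QuotientGroup.mk y)).2
        have h2 : y * (y⁻¹ * g * y * g⁻¹) * y⁻¹ ∈ upperCentralSeries G i :=
          Subgroup.Normal.conj_mem (inferInstance : (Subgroup.upperCentralSeries G i).Normal) _ h1 y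
        have h3 : y * (y⁻¹ * g * y * g⁻¹) * y⁻¹ = g * y * g⁻¹ * y⁻¹ := by group
        rwa [h3] at h2
      refine ⟨⟨(QuotientGroup.mk' (Subgroup.center G)) g, g, ⟨hgA, hgU⟩, rfl⟩, ?_⟩
      apply Subtype.ext
      rw [hΨval]
      simp only [QuotientGroup.mk'_apply, stmt15Phi_out]
      funext q
      have : stmt15Phi N g q = f (QuotientGroup.mk (Quotient.out q)) := by
        rw [hfg]
        rfl
      rw [this, QuotientGroup.out_eq']
  -- multiplicativity of Ψ
  have hΨmul : ∀ s₁ s₂, (Ψ (s₁ * s₂)).1 = (Ψ s₁).1 * (Ψ s₂).1 := by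
    rintro ⟨s₁, g₁, hg₁, rfl⟩ ⟨s₂, g₂, hg₂, rfl⟩
    rw [hΨval, hΨval, hΨval]
    have hmul : ((⟨(QuotientGroup.mk' (Subgroup.center G)) g₁, g₁, hg₁, rfl⟩ *
        ⟨(QuotientGroup.mk' (Subgroup.center G)) g₂, g₂, hg₂, rfl⟩ :
        ((Astar ⊓ upperCentralSeries G (i + 1)).map
          (QuotientGroup.mk' (Subgroup.center G)))) : G ⧸ Subgroup.center G) =
        (QuotientGroup.mk' (Subgroup.center G)) (g₁ * g₂) := by
      simp
    rw [hmul]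
    simp only [QuotientGroup.mk'_apply, stmt15Phi_out]
    funext q
    set x := Quotient.out q with hx
    have hg₁ZN : g₁ ∈ ZN := (hAstarP g₁ hg₁.1).1
    have hg₂ZN : g₂ ∈ ZN := (hAstarP g₂ hg₂.1).1
    have hb : x⁻¹ * g₂ * x * g₂⁻¹ ∈ ZN :=
      mul_mem (hconjZN g₂ hg₂ZN x) (inv_mem hg₂ZN)
    have hcb : g₁ * (x⁻¹ * g₂ * x * g₂⁻¹) = (x⁻¹ * g₂ * x * g₂⁻¹) * g₁ :=
      hcomm g₁ hg₁ZN _ hb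
    show x⁻¹ * (g₁ * g₂) * x * (g₁ * g₂)⁻¹ =
        (x⁻¹ * g₁ * x * g₁⁻¹) * (x⁻¹ * g₂ * x * g₂⁻¹)
    calc x⁻¹ * (g₁ * g₂) * x * (g₁ * g₂)⁻¹
        = (x⁻¹ * g₁ * x * g₁⁻¹) * (g₁ * (x⁻¹ * g₂ * x * g₂⁻¹) * g₁⁻¹) := by group
      _ = (x⁻¹ * g₁ * x * g₁⁻¹) * ((x⁻¹ * g₂ * x * g₂⁻¹) * g₁ * g₁⁻¹) := by
          rw [hcb]
      _ = (x⁻¹ * g₁ * x * g₁⁻¹) * (x⁻¹ * g₂ * x * g₂⁻¹) := by group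
  -- assemble the equivalence
  refine ⟨(Equiv.ofBijective Ψ ⟨hinj, hsurj⟩).symm, ?_⟩
  intro f₁ f₂ hprod
  rw [Equiv.symm_apply_eq]
  apply Subtype.ext
  have h1 : Ψ ((Equiv.ofBijective Ψ ⟨hinj, hsurj⟩).symm f₁) = f₁ :=
    Equiv.apply_symm_apply (Equiv.ofBijective Ψ ⟨hinj, hsurj⟩) f₁
  have h2 : Ψ ((Equiv.ofBijective Ψ ⟨hinj, hsurj⟩).symm f₂) = f₂ :=
    Equiv.apply_symm_apply (Equiv.ofBijective Ψ ⟨hinj, hsurj⟩) f₂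
  calc (⟨f₁.1 * f₂.1, hprod⟩ : {f : G ⧸ N → G //
          (∀ q, f q ∈ A ⊓ upperCentralSeries G i) ∧
          ∀ g h : G, f (QuotientGroup.mk (g * h)) =
            h⁻¹ * f (QuotientGroup.mk g) * h * f (QuotientGroup.mk h)}).1
      = f₁.1 * f₂.1 := rfl
    _ = (Ψ ((Equiv.ofBijective Ψ ⟨hinj, hsurj⟩).symm f₁)).1 *
        (Ψ ((Equiv.ofBijective Ψ ⟨hinj, hsurj⟩).symm f₂)).1 := by rw [h1, h2]
    _ = (Ψ ((Equiv.ofBijective Ψ ⟨hinj, hsurj⟩).symm f₁ *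
        (Equiv.ofBijective Ψ ⟨hinj, hsurj⟩).symm f₂)).1 := (hΨmul _ _).symm
    _ = ((Equiv.ofBijective Ψ ⟨hinj, hsurj⟩)
        ((Equiv.ofBijective Ψ ⟨hinj, hsurj⟩).symm f₁ *
         (Equiv.ofBijective Ψ ⟨hinj, hsurj⟩).symm f₂)).1 := rfl
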